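/- arXiv:2405.13313 — 2 statements merged into one kernel-verified Lean document; each statement's English description precedes it below -/
import Mathlib

section
/- Let n ≥ 3 be an integer and c > 0. Let u : ℝ → ℝ be differentiable on (0, 1/4] and satisfy u(p) ≥ c/p^{n-2} for all p ∈ (0, 1/4]. Then for every θ with 0 < θ < c·(n−2), there exists a ∈ (0, 1/4] such that a^{n-1}·|u'(a)| ≥ θ. -/
open Set

/-- If `u(p) ≥ c/p^(n-2)` on `(0, 1/4]`, then for every `0 < θ < c(n−2)` there
is a point `a ∈ (0, 1/4]` where the scaled derivative satisfies
`a^(n-1)·|u'(a)| ≥ θ`. -/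
theorem scaled_derivative_lower_bound
    (n : ℕ) (hn : 3 ≤ n) (c : ℝ) (hc : 0 < c)
    (u u' : ℝ → ℝ)
    (hu : ∀ p ∈ Set.Ioc (0:ℝ) (1/4), HasDerivAt u (u' p) p)
    (hlow : ∀ p ∈ Set.Ioc (0:ℝ) (1/4), c / p ^ (n - 2) ≤ u p) :
    ∀ θ : ℝ, 0 < θ → θ < c * ((n : ℝ) - 2) →
      ∃ a ∈ Set.Ioc (0:ℝ) (1/4), θ ≤ a ^ (n - 1) * |u' a| := by
  intro θ hθ hθc
  by_contra hcon
  push_neg at hcon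
  have hn3 : (3:ℝ) ≤ (n:ℝ) := by exact_mod_cast hn
  have hn2 : (0:ℝ) < (n:ℝ) - 2 := by linarith
  set m : ℤ := 2 - (n:ℤ) with hm
  set w : ℝ → ℝ := fun x => u x - θ/((n:ℝ)-2) * x ^ m with hwdef
  -- zpow rewriting lemmas
  have hzpow : ∀ x : ℝ, x ^ m = (x ^ (n-2))⁻¹ := by
    intro x
    have : m = -((n-2 : ℕ) : ℤ) := by
      have : ((n-2:ℕ):ℤ) = (n:ℤ) - 2 := by omega
      rw [this, hm]; ring
    rw [this, zpow_neg, zpow_natCast]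
  have hzpow' : ∀ x : ℝ, x ^ (m-1) = (x ^ (n-1))⁻¹ := by
    intro x
    have : m - 1 = -((n-1 : ℕ) : ℤ) := by
      have : ((n-1:ℕ):ℤ) = (n:ℤ) - 1 := by omega
      rw [this, hm]; ring
    rw [this, zpow_neg, zpow_natCast]
  have hderiv : ∀ x ∈ Set.Ioc (0:ℝ) (1/4),
      HasDerivAt w (u' x + θ * x ^ (m - 1)) x := by
    intro x hx
    have hx0 : x ≠ 0 := ne_of_gt hx.1
    have h1 := (hasDerivAt_zpow m x (Or.inl hx0)).const_mul (θ/((n:ℝ)-2))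
    have h2 := (hu x hx).sub h1
    refine HasDerivAt.congr_deriv h2 ?_
    have hmc : ((m:ℤ):ℝ) = 2 - (n:ℝ) := by rw [hm]; push_cast; ring
    rw [hmc]
    field_simp
    ring
  have hcont : ContinuousOn w (Set.Ioc (0:ℝ) (1/4)) :=
    fun x hx => (hderiv x hx).continuousAt.continuousWithinAt
  have hmono : StrictMonoOn w (Set.Ioc (0:ℝ) (1/4)) := by
    apply strictMonoOn_of_deriv_pos (convex_Ioc _ _) hcont
    intro x hx
    rw [interior_Ioc] at hx
    have hx' : x ∈ Set.Ioc (0:ℝ) (1/4) := ⟨hx.1, hx.2.le⟩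
    rw [(hderiv x hx').deriv]
    have hxpow : (0:ℝ) < x ^ (n-1) := pow_pos hx.1 _
    have h := hcon x hx'
    have habs : |u' x| < θ / x ^ (n-1) := by
      rw [lt_div_iff₀ hxpow]; linarith [mul_comm (x ^ (n-1)) (|u' x|)]
    have hub : -u' x < θ / x ^ (n-1) := lt_of_le_of_lt (neg_le_abs _) habs
    rw [hzpow']
    rw [div_eq_mul_inv] at hub
    linarith
  -- choose a small point p
  set K := w (1/4) with hK
  have hδ : 0 < c - θ/((n:ℝ)-2) := by
    have : θ/((n:ℝ)-2) < c := (div_lt_iff₀ hn2).mpr (by linarith [mul_comm c ((n:ℝ)-2)])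
    linarith
  set δ := c - θ/((n:ℝ)-2) with hδdef
  set p := min (1/8 : ℝ) (δ/(|K|+1+δ)) with hp
  have hD : (0:ℝ) < |K|+1+δ := by positivity
  have hp0 : 0 < p := lt_min (by norm_num) (div_pos hδ hD)
  have hp14 : p < 1/4 := lt_of_le_of_lt (min_le_left _ _) (by norm_num)
  have hp1 : p ≤ 1 := le_trans (min_le_left _ _) (by norm_num)
  have hpmem : p ∈ Set.Ioc (0:ℝ) (1/4) := ⟨hp0, hp14.le⟩
  have hqmem : (1/4:ℝ) ∈ Set.Ioc (0:ℝ) (1/4) := ⟨by norm_num, le_rfl⟩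
  have hwlt : w p < K := hmono hpmem hqmem hp14
  have hup : c / p ^ (n-2) ≤ u p := hlow p hpmem
  have hppos : (0:ℝ) < p ^ (n-2) := pow_pos hp0 _
  set q := (p ^ (n-2))⁻¹ with hq
  have hq0 : 0 < q := inv_pos.mpr hppos
  have hwp : w p = u p - θ/((n:ℝ)-2) * q := by
    rw [hwdef]; simp only []; rw [hzpow p]
  have hcq : c / p ^ (n-2) = c * q := by rw [hq, div_eq_mul_inv]
  have hδq : δ * q < K := by
    rw [hwp] at hwlt
    rw [hcq] at hup
    rw [hδdef]
    nlinarith [hq0, hwlt, hup]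
  -- but δ * q is large
  have hn20 : n - 2 ≠ 0 := by omega
  have hple : p ^ (n-2) ≤ p := pow_le_of_le_one hp0.le hp1 hn20
  have h1 : δ / p ≤ δ / p ^ (n-2) := div_le_div_of_nonneg_left hδ.le hppos hple
  have h2 : |K| + 1 + δ ≤ δ / p := by
    rw [le_div_iff₀ hp0]
    have hple2 : p ≤ δ/(|K|+1+δ) := min_le_right _ _
    calc (|K|+1+δ) * p ≤ (|K|+1+δ) * (δ/(|K|+1+δ)) := by
          exact mul_le_mul_of_nonneg_left hple2 hD.le
      _ = δ := by field_simp
  have h3 : δ / p ^ (n-2) = δ * q := by rw [hq, div_eq_mul_inv]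
  have := le_abs_self K
  clear_value K δ p q
  linarith
end

section
/- Let n ≥ 3 and m ≥ 100 be integers and let b_{1,m} : (0,1) → ℝ be the truncated radial drift profile with C = 1, i.e. b_{1,m}(r) = 1/(1−r) for 0 < r ≤ 1 − 1/m and b_{1,m}(r) = m for 1 − 1/m < r < 1. Let u : ℝ → ℝ be twice differentiable on (0,1), continuous on (0,1] with u(1) = 0, satisfy u''(r) + ((n-1)/r)·u'(r) − b_{1,m}(r)·u'(r) = 0 for all r ∈ (0,1), and suppose there exist C₀ > 0 and a ∈ (0, 1/4] such that u'(a) ≤ 0 and a^{n-1}·|u'(a)| ≥ C₀. Then u(1/2) ≥ (C₀/2)·log(m/2). -/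
open Set

/-- The truncated radial drift profile with `C = 1`: `b_{1,m}(r) = 1/(1−r)` for
`r ≤ 1 − 1/m` and `b_{1,m}(r) = m` for `1 − 1/m < r`. -/
noncomputable def driftProfileOne (m : ℕ) (r : ℝ) : ℝ :=
  if r ≤ 1 - 1 / (m : ℝ) then 1 / (1 - r) else (m : ℝ)

lemma drift_eq_min (m : ℕ) (hm : 100 ≤ m) {r : ℝ} (hr : r < 1) :
    driftProfileOne m r = min (1/(1-r)) (m : ℝ) := by
  have hm' : (100:ℝ) ≤ m := by exact_mod_cast hm
  have hmpos : (0:ℝ) < m := by linarith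
  have h1r : (0:ℝ) < 1 - r := by linarith
  unfold driftProfileOne
  split_ifs with h
  · have h2 : 1/(m:ℝ) ≤ 1 - r := by linarith
    rw [min_eq_left]
    rw [div_le_iff₀ h1r]
    calc (1:ℝ) = m * (1/m) := by field_simp
    _ ≤ m * (1-r) := by nlinarith
  · push_neg at h
    have h2 : 1 - r < 1/(m:ℝ) := by linarith
    rw [min_eq_right]
    rw [le_div_iff₀ h1r]
    calc (m:ℝ) * (1-r) ≤ m * (1/m) := by nlinarith
    _ = 1 := by field_simp

lemma drift_nonneg (m : ℕ) (hm : 100 ≤ m) {r : ℝ} (hr0 : 0 < r) (hr : r < 1) :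
    0 ≤ driftProfileOne m r := by
  rw [drift_eq_min m hm hr]
  have hm' : (100:ℝ) ≤ m := by exact_mod_cast hm
  have h1r : (0:ℝ) < 1 - r := by linarith
  exact le_min (by positivity) (by linarith)

lemma drift_contOn (m : ℕ) (hm : 100 ≤ m) :
    ContinuousOn (driftProfileOne m) (Iio (1:ℝ)) := by
  have : ContinuousOn (fun r => min (1/(1-r)) (m : ℝ)) (Iio (1:ℝ)) := by
    apply ContinuousOn.inf' _ continuousOn_const
    apply ContinuousOn.div continuousOn_const ((continuous_const.sub continuous_id).continuousOn)
    intro x hx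
    simp only [mem_Iio] at hx
    intro h
    have h' : (1:ℝ) - x = 0 := h
    linarith
  exact this.congr (fun r hr => drift_eq_min m hm hr)


set_option maxHeartbeats 1000000 in
/-- Quantitative ODE form of the counterexample: a radial solution with
`u(1) = 0` and a point `a ∈ (0,1/4]` with `u'(a) ≤ 0` and
`a^(n-1)|u'(a)| ≥ C₀` satisfies `u(1/2) ≥ (C₀/2)·log(m/2)`. -/
theorem value_lower_bound_from_scaled_derivative
    (n : ℕ) (hn : 3 ≤ n) (m : ℕ) (hm : 100 ≤ m)
    (u u' u'' : ℝ → ℝ)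
    (hu : ∀ r ∈ Set.Ioo (0:ℝ) 1, HasDerivAt u (u' r) r)
    (hu' : ∀ r ∈ Set.Ioo (0:ℝ) 1, HasDerivAt u' (u'' r) r)
    (hcont : ContinuousOn u (Set.Ioc 0 1)) (hu1 : u 1 = 0)
    (hode : ∀ r ∈ Set.Ioo (0:ℝ) 1,
      u'' r + ((n : ℝ) - 1) / r * u' r - driftProfileOne m r * u' r = 0)
    (C₀ : ℝ) (hC₀ : 0 < C₀) (a : ℝ) (ha : a ∈ Set.Ioc (0:ℝ) (1/4))
    (ha' : u' a ≤ 0) (ha'' : C₀ ≤ a ^ (n - 1) * |u' a|) :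
    (C₀ / 2) * Real.log ((m : ℝ) / 2) ≤ u (1/2) := by
  have hm' : (100:ℝ) ≤ m := by exact_mod_cast hm
  have hmpos : (0:ℝ) < m := by linarith
  set t : ℝ := 1 - 1/(m:ℝ) with htdef
  clear_value t
  have hminv : (0:ℝ) < 1/m := by positivity
  have hminv' : (1:ℝ)/m ≤ 1/100 := by
    rw [div_le_div_iff₀ hmpos (by norm_num)] <;> linarith
  have ht1 : t < 1 := by simp only [htdef]; linarith
  have ht2 : (1/2:ℝ) < t := by simp only [htdef]; linarith
  have ha1 : 0 < a := ha.1
  have ha2 : a ≤ 1/4 := ha.2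
  have haI : a ∈ Ioo (0:ℝ) 1 := ⟨ha1, by linarith⟩
  have hhalfI : (1/2:ℝ) ∈ Ioo (0:ℝ) 1 := by norm_num
  set k := n - 1 with hkdef
  clear_value k
  have hkcast : ((k:ℕ):ℝ) = (n:ℝ) - 1 := by
    have : (1:ℕ) ≤ n := by omega
    push_cast [hkdef, Nat.cast_sub this]; ring
  have hk1 : 1 ≤ k := by omega
  -- the forcing function
  set f : ℝ → ℝ := fun s => driftProfileOne m s - ((n:ℝ)-1)/s with hfdef
  have hfcont : ContinuousOn f (Ioo (0:ℝ) 1) := by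
    apply ContinuousOn.sub ((drift_contOn m hm).mono (fun x hx => hx.2))
    exact ContinuousOn.div continuousOn_const continuousOn_id
      (fun x hx => ne_of_gt hx.1)
  have hsubIoo : ∀ x ∈ Ioo (0:ℝ) 1, ∀ y ∈ Ioo (0:ℝ) 1, uIcc x y ⊆ Ioo (0:ℝ) 1 := by
    intro x hx y hy z hz
    rw [Set.mem_uIcc] at hz
    constructor <;> rcases hz with ⟨h1,h2⟩|⟨h1,h2⟩ <;>
      [linarith [hx.1]; linarith [hy.1]; linarith [hy.2]; linarith [hx.2]]
  have hfint : ∀ x ∈ Ioo (0:ℝ) 1, ∀ y ∈ Ioo (0:ℝ) 1,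
      IntervalIntegrable f MeasureTheory.volume x y := by
    intro x hx y hy
    exact (hfcont.mono (hsubIoo x hx y hy)).intervalIntegrable
  set G : ℝ → ℝ := fun r => ∫ s in (1/2:ℝ)..r, f s with hGdef
  have hG : ∀ r ∈ Ioo (0:ℝ) 1, HasDerivAt G (f r) r := by
    intro r hr
    apply intervalIntegral.integral_hasDerivAt_right (hfint _ hhalfI _ hr)
    · exact hfcont.stronglyMeasurableAtFilter isOpen_Ioo r hr
    · exact hfcont.continuousAt (isOpen_Ioo.mem_nhds hr)
  set φ : ℝ → ℝ := fun r => u' r * Real.exp (-G r) with hφdef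
  have hφ : ∀ r ∈ Ioo (0:ℝ) 1, HasDerivAt φ 0 r := by
    intro r hr
    have h1 := hu' r hr
    have h2 : HasDerivAt (fun s => Real.exp (-G s)) (Real.exp (-G r) * (-f r)) r :=
      ((hG r hr).neg).exp
    have h3 := h1.mul h2
    have hode' := hode r hr
    have hxx : u'' r = f r * u' r := by
      simp only [hfdef]; ring_nf; ring_nf at hode'; linarith
    have h4 : HasDerivAt φ (u'' r * Real.exp (-G r) + u' r * (Real.exp (-G r) * -f r)) r := h3
    convert h4 using 1
    rw [hxx]; ring
  have hφconst : ∀ x ∈ Ioo (0:ℝ) 1, ∀ y ∈ Ioo (0:ℝ) 1, x ≤ y → φ y = φ x := by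
    intro x hx y hy hxy
    rcases eq_or_lt_of_le hxy with rfl|hlt
    · rfl
    have hsub : Icc x y ⊆ Ioo (0:ℝ) 1 := fun z hz => ⟨lt_of_lt_of_le hx.1 hz.1,
      lt_of_le_of_lt hz.2 hy.2⟩
    have hdiff : ∀ z ∈ Icc x y, HasDerivAt φ 0 z := fun z hz => hφ z (hsub hz)
    have h1 : DifferentiableOn ℝ φ (Icc x y) :=
      fun z hz => (hdiff z hz).differentiableAt.differentiableWithinAt
    have h2 : ∀ z ∈ Ico x y, derivWithin φ (Icc x y) z = 0 := by
      intro z hz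
      exact (hdiff z ⟨hz.1, hz.2.le⟩).hasDerivWithinAt.derivWithin
        (uniqueDiffOn_Icc hlt z ⟨hz.1, hz.2.le⟩)
    exact constant_of_derivWithin_zero h1 h2 y ⟨hxy, le_rfl⟩
  have hu'a : u' a < 0 := by
    rcases lt_or_eq_of_le ha' with h|h
    · exact h
    · exfalso; rw [h] at ha''; simp at ha''; linarith
  have hform : ∀ r ∈ Ioo (0:ℝ) 1, a ≤ r → u' r = u' a * Real.exp (G r - G a) := by
    intro r hr har
    have heq : u' r * Real.exp (-G r) = u' a * Real.exp (-G a) := hφconst a haI r hr har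
    rw [Real.exp_sub]
    rw [Real.exp_neg, Real.exp_neg] at heq
    have e1 := Real.exp_ne_zero (G r)
    have e2 := Real.exp_ne_zero (G a)
    field_simp at heq ⊢
    linarith
  have hu'neg : ∀ r ∈ Ioo (0:ℝ) 1, a ≤ r → u' r < 0 := by
    intro r hr har
    rw [hform r hr har]
    exact mul_neg_of_neg_of_pos hu'a (Real.exp_pos _)
  have htI : t ∈ Ioo (0:ℝ) 1 := ⟨by linarith, ht1⟩
  have hn' : (3:ℝ) ≤ (n:ℝ) := by exact_mod_cast hn
  have hbint : ∀ x ∈ Ioo (0:ℝ) 1, ∀ y ∈ Ioo (0:ℝ) 1,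
      IntervalIntegrable (driftProfileOne m) MeasureTheory.volume x y := fun x hx y hy =>
    (((drift_contOn m hm).mono ((hsubIoo x hx y hy).trans (fun z hz => hz.2))).intervalIntegrable)
  -- the key pointwise lower bound on [1/2, t]
  have hbound : ∀ r ∈ Icc (1/2:ℝ) t, C₀ / (2*(1-r)) ≤ -u' r := by
    intro r hr
    have hr1 : (1/2:ℝ) ≤ r := hr.1
    have hr2 : r ≤ t := hr.2
    have hrI : r ∈ Ioo (0:ℝ) 1 := ⟨by linarith, by linarith⟩
    have h1r : (0:ℝ) < 1 - r := by linarith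
    have har : a ≤ r := by linarith
    have hsplit : G r - G a = ∫ s in a..r, f s := by
      simp only [hGdef]
      exact intervalIntegral.integral_interval_sub_left (hfint _ hhalfI _ hrI)
        (hfint _ hhalfI _ haI)
    have hvint : IntervalIntegrable (fun s => ((n:ℝ)-1)/s) MeasureTheory.volume a r := by
      apply ContinuousOn.intervalIntegrable
      apply ContinuousOn.div continuousOn_const continuousOn_id
      intro x hx
      exact ne_of_gt ((hsubIoo a haI r hrI) hx).1
    have hfsub : ∫ s in a..r, f s =
        (∫ s in a..r, driftProfileOne m s) - ∫ s in a..r, ((n:ℝ)-1)/s := by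
      simp only [hfdef]
      exact intervalIntegral.integral_sub (hbint a haI r hrI) hvint
    have hlogint : ∫ s in a..r, ((n:ℝ)-1)/s = ((n:ℝ)-1) * Real.log (r/a) := by
      simp only [div_eq_mul_inv]
      rw [intervalIntegral.integral_const_mul, integral_inv_of_pos ha1 hrI.1,
        div_eq_mul_inv]
    have hb1 : ∫ s in a..r, driftProfileOne m s =
        (∫ s in a..(1/2:ℝ), driftProfileOne m s) + ∫ s in (1/2:ℝ)..r, driftProfileOne m s :=
      (intervalIntegral.integral_add_adjacent_intervals (hbint a haI _ hhalfI)
        (hbint _ hhalfI r hrI)).symm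
    have hb2 : 0 ≤ ∫ s in a..(1/2:ℝ), driftProfileOne m s := by
      apply intervalIntegral.integral_nonneg (by linarith : a ≤ 1/2)
      intro s hs
      exact drift_nonneg m hm (lt_of_lt_of_le ha1 hs.1) (by linarith [hs.2])
    have hb3 : ∫ s in (1/2:ℝ)..r, driftProfileOne m s = ∫ s in (1/2:ℝ)..r, (1-s)⁻¹ := by
      apply intervalIntegral.integral_congr
      intro s hs
      rw [uIcc_of_le hr1] at hs
      have hst : s ≤ 1 - 1/(m:ℝ) := by rw [← htdef]; linarith [hs.2]
      unfold driftProfileOne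
      rw [if_pos hst, one_div]
    have hb4 : ∫ s in (1/2:ℝ)..r, (1-s)⁻¹ =
        (-Real.log (1-r)) - (-Real.log (1-1/2)) := by
      apply intervalIntegral.integral_eq_sub_of_hasDerivAt
      · intro s hs
        rw [uIcc_of_le hr1] at hs
        have hs1 : (0:ℝ) < 1 - s := by linarith [hs.2]
        have h : HasDerivAt (fun x => -Real.log (1 - x)) (-(-1 / (1 - s))) s := (((hasDerivAt_id s).const_sub 1).log (ne_of_gt hs1)).neg
        rw [show (1 - s)⁻¹ = -(-1 / (1 - s)) by simp only [neg_div, neg_neg, one_div]]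
        exact h
      · apply ContinuousOn.intervalIntegrable
        rw [uIcc_of_le hr1]
        apply ContinuousOn.inv₀ ((continuous_const.sub continuous_id).continuousOn)
        intro x hx
        have : (0:ℝ) < 1 - x := by linarith [hx.2]
        exact ne_of_gt this
    have hlogr : Real.log r ≤ 0 := Real.log_nonpos (by linarith) (by linarith)
    have hGlb : Real.log (a^k / (2*(1-r))) ≤ G r - G a := by
      rw [hsplit, hfsub, hlogint, hb1, hb3, hb4]
      rw [Real.log_div (by positivity) (by positivity), Real.log_pow,
        Real.log_mul two_ne_zero (ne_of_gt h1r),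
        Real.log_div (ne_of_gt hrI.1) (ne_of_gt ha1)]
      have e12 : (1:ℝ) - 1/2 = 2⁻¹ := by norm_num
      rw [e12, Real.log_inv, hkcast]
      have hkr : ((n:ℝ)-1) * Real.log r ≤ 0 :=
        mul_nonpos_of_nonneg_of_nonpos (by linarith) hlogr
      linarith [hb2]
    have hexp : a^k/(2*(1-r)) ≤ Real.exp (G r - G a) :=
      calc a^k/(2*(1-r)) = Real.exp (Real.log (a^k/(2*(1-r)))) :=
            (Real.exp_log (by positivity)).symm
      _ ≤ Real.exp (G r - G a) := Real.exp_le_exp.mpr hGlb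
    have hu'a' : C₀ / a^k ≤ -u' a := by
      rw [div_le_iff₀ (by positivity : (0:ℝ) < a^k)]
      rw [abs_of_nonpos ha'] at ha''
      linarith [mul_comm (a^k) (-u' a)]
    have hfin : C₀/(2*(1-r)) ≤ (-u' a) * Real.exp (G r - G a) := by
      have h0 : C₀/(2*(1-r)) = (C₀/a^k) * (a^k/(2*(1-r))) := by
        field_simp
      rw [h0]
      exact mul_le_mul hu'a' hexp (by positivity) (by linarith)
    rw [hform r hrI har]
    have hre : -(u' a * Real.exp (G r - G a)) = (-u' a) * Real.exp (G r - G a) := by ring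
    linarith
  -- u t ≥ 0
  have hut : 0 ≤ u t := by
    have hanti : AntitoneOn u (Icc t 1) := by
      apply antitoneOn_of_deriv_nonpos (convex_Icc t 1)
      · exact hcont.mono (fun z hz => ⟨by linarith [hz.1], hz.2⟩)
      · rw [interior_Icc]
        intro z hz
        exact (hu z ⟨by linarith [hz.1], hz.2⟩).differentiableAt.differentiableWithinAt
      · rw [interior_Icc]
        intro z hz
        have hzI : z ∈ Ioo (0:ℝ) 1 := ⟨by linarith [hz.1], hz.2⟩
        rw [(hu z hzI).deriv]
        exact (hu'neg z hzI (by linarith [hz.1])).le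
    have := hanti ⟨le_refl t, ht1.le⟩ ⟨ht1.le, le_refl 1⟩ ht1.le
    rw [hu1] at this; exact this
  -- FTC on [1/2, t]
  have hu'cont : ContinuousOn u' (Icc (1/2:ℝ) t) := by
    intro z hz
    have hzI : z ∈ Ioo (0:ℝ) 1 := ⟨by linarith [hz.1], lt_of_le_of_lt hz.2 ht1⟩
    exact ((hu' z hzI).continuousAt).continuousWithinAt
  have hu'int : IntervalIntegrable u' MeasureTheory.volume (1/2) t := by
    apply ContinuousOn.intervalIntegrable
    rwa [uIcc_of_le ht2.le]
  have hFTC : ∫ r in (1/2:ℝ)..t, u' r = u t - u (1/2) := by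
    apply intervalIntegral.integral_eq_sub_of_hasDerivAt _ hu'int
    intro x hx
    rw [uIcc_of_le ht2.le] at hx
    exact hu x ⟨by linarith [hx.1], lt_of_le_of_lt hx.2 ht1⟩
  -- exact value of the comparison integral
  have hcompint : ∫ r in (1/2:ℝ)..t, C₀ / (2*(1-r)) = (C₀/2) * Real.log ((m:ℝ)/2) := by
    have hF : ∀ r ∈ uIcc (1/2:ℝ) t,
        HasDerivAt (fun s => -(C₀/2) * Real.log (1-s)) (C₀/(2*(1-r))) r := by
      intro r hr
      rw [uIcc_of_le ht2.le] at hr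
      have h1r : (0:ℝ) < 1 - r := by linarith [hr.2]
      have h : HasDerivAt (fun s => -(C₀/2) * Real.log (1-s)) (-(C₀/2) * (-1 / (1 - r))) r := (((hasDerivAt_id r).const_sub 1).log (ne_of_gt h1r)).const_mul (-(C₀/2))
      convert h using 1
      field_simp
    have hInt : IntervalIntegrable (fun r => C₀/(2*(1-r))) MeasureTheory.volume (1/2) t := by
      apply ContinuousOn.intervalIntegrable
      rw [uIcc_of_le ht2.le]
      apply ContinuousOn.div continuousOn_const
        ((continuous_const.mul (continuous_const.sub continuous_id)).continuousOn)
      intro x hx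
      have : (0:ℝ) < 1 - x := by linarith [hx.2]
      exact mul_ne_zero two_ne_zero (ne_of_gt this)
    rw [intervalIntegral.integral_eq_sub_of_hasDerivAt hF hInt]
    rw [htdef]
    have e1 : (1:ℝ) - (1 - 1/m) = (m:ℝ)⁻¹ := by field_simp; ring
    have e2 : (1:ℝ) - 1/2 = 2⁻¹ := by norm_num
    rw [e1, e2, Real.log_inv, Real.log_inv,
      Real.log_div (ne_of_gt hmpos) two_ne_zero]
    ring
  have hInt2 : IntervalIntegrable (fun r => C₀/(2*(1-r))) MeasureTheory.volume (1/2) t := by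
    apply ContinuousOn.intervalIntegrable
    rw [uIcc_of_le ht2.le]
    apply ContinuousOn.div continuousOn_const
      ((continuous_const.mul (continuous_const.sub continuous_id)).continuousOn)
    intro x hx
    have : (0:ℝ) < 1 - x := by linarith [hx.2]
    exact mul_ne_zero two_ne_zero (ne_of_gt this)
  have hmono : ∫ r in (1/2:ℝ)..t, C₀ / (2*(1-r)) ≤ ∫ r in (1/2:ℝ)..t, -u' r :=
    intervalIntegral.integral_mono_on ht2.le hInt2 hu'int.neg hbound
  have hneg : ∫ r in (1/2:ℝ)..t, -u' r = u (1/2) - u t := by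
    rw [intervalIntegral.integral_neg, hFTC]; ring
  rw [hcompint, hneg] at hmono
  linarith
end
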